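/- arXiv:2008.12515 — 6 statements merged into one kernel-verified Lean document; each statement's English description precedes it below -/
import Mathlib

section
/- If Z is a decision structure and P is a modular partition of its node set (a partition all of whose blocks are modules), then the quotient graph Z/P (with nodes the blocks of P and an arc between blocks iff some arc of Z joins them) is again a decision structure: it is acyclic, has a unique source, and all arcs out of a given block can be assigned distinct labels inherited from Z. -/
/-- A labelled directed graph given by a partial out-arc map: `out v r` is the head of
the `r`-labelled arc out of `v`, if it exists.  (This encoding automatically ensures that
all arcs out of a given node have distinct labels.) -/
structure DGraph (V R : Type) where
  out : V → R → Option V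

namespace DGraph

variable {V R : Type}

/-- `v` has an arc to `w` (with some label). -/
def Adj (Z : DGraph V R) (v w : V) : Prop := ∃ r, Z.out v r = some w

/-- A source: a node that is the head of no arc. -/
def IsSource (Z : DGraph V R) (s : V) : Prop := ∀ v r, Z.out v r ≠ some s

/-- A sink: a node that is the tail of no arc. -/
def IsSink (Z : DGraph V R) (v : V) : Prop := ∀ r, Z.out v r = none

/-- `Z` is a decision structure: no parallel arcs (distinct labels out of a node have
distinct heads, so labelled arcs correspond to graph arcs), acyclic, unique source. -/
def IsDS (Z : DGraph V R) : Prop :=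
  (∀ v r₁ r₂ w, Z.out v r₁ = some w → Z.out v r₂ = some w → r₁ = r₂) ∧
  (∀ v, ¬ Relation.TransGen Z.Adj v v) ∧
  (∃! s, Z.IsSource s)

/-- Adjacency within the induced subgraph on `X`. -/
def AdjOn (Z : DGraph V R) (X : Set V) (v w : V) : Prop :=
  v ∈ X ∧ w ∈ X ∧ Z.Adj v w

/-- `s` is a source of the subgraph induced by `X`: it is in `X` and receives no arc
from a node of `X`. -/
def IsSourceOn (Z : DGraph V R) (X : Set V) (s : V) : Prop :=
  s ∈ X ∧ ∀ v ∈ X, ∀ r, Z.out v r ≠ some s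

/-- The subgraph induced by `X` is a decision structure: acyclic with a unique source. -/
def IsDSOn (Z : DGraph V R) (X : Set V) : Prop :=
  (∀ v, ¬ Relation.TransGen (Z.AdjOn X) v v) ∧ (∃! s, Z.IsSourceOn X s)

/-- `X` is a module of `Z`: the induced subgraph is a decision structure, every arc from
outside `X` into `X` goes to the source of `X`, and whenever an `r`-labelled arc leaves
`X` towards `v`, every node of `X` has an `r`-labelled out-arc going either to `v` or to
another node of `X`. -/
def IsModule (Z : DGraph V R) (X : Set V) : Prop :=
  Z.IsDSOn X ∧
  (∀ v, v ∉ X → ∀ r w, Z.out v r = some w → w ∈ X → Z.IsSourceOn X w) ∧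
  (∀ x ∈ X, ∀ r v, Z.out x r = some v → v ∉ X →
      ∀ y ∈ X, ∃ u, Z.out y r = some u ∧ (u = v ∨ u ∈ X))

end DGraph

namespace DGraph

variable {V R : Type}

/-- `P` is a partition of the node set. -/
def IsPartition (P : Set (Set V)) : Prop :=
  ∀ v : V, ∃! B, B ∈ P ∧ v ∈ B

/-- A modular partition: a partition of the node set all of whose blocks are modules. -/
def IsModularPartition (Z : DGraph V R) (P : Set (Set V)) : Prop :=
  IsPartition P ∧ ∀ B ∈ P, Z.IsModule B

/-- A maximal module: a proper module contained in no module other than the whole node set. -/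
def IsMaximalModule (Z : DGraph V R) (M : Set V) : Prop :=
  Z.IsModule M ∧ M ≠ Set.univ ∧
  ∀ M', Z.IsModule M' → M ⊆ M' → M' = M ∨ M' = Set.univ

/-- Quotient adjacency between two blocks: they are distinct and some arc of `Z` joins them. -/
def InterAdj (Z : DGraph V R) (B C : Set V) : Prop :=
  B ≠ C ∧ ∃ b ∈ B, ∃ c ∈ C, Z.Adj b c

end DGraph

section Aux

open DGraph Relation

variable {V R : Type}

attribute [local instance] Classical.propDecidable

noncomputable def blk (P : Set (Set V)) (hP : DGraph.IsPartition P) (v : V) :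
    {B : Set V // B ∈ P} :=
  ⟨(hP v).choose, (hP v).choose_spec.1.1⟩

lemma mem_blk (P : Set (Set V)) (hP : DGraph.IsPartition P) (v : V) :
    v ∈ (blk P hP v).1 :=
  (hP v).choose_spec.1.2

lemma blk_eq (P : Set (Set V)) (hP : DGraph.IsPartition P) {v : V}
    {B : {B : Set V // B ∈ P}} (hv : v ∈ B.1) : blk P hP v = B := by
  apply Subtype.ext
  exact ((hP v).choose_spec.2 B.1 ⟨B.2, hv⟩).symm

lemma blocks_ne {P : Set (Set V)} (hP : DGraph.IsPartition P) {v : V}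
    {B C : {B : Set V // B ∈ P}} (hv : v ∈ B.1) (hv' : v ∉ C.1) : B ≠ C := by
  rintro rfl; exact hv' hv

lemma mem_of_ne {P : Set (Set V)} (hP : DGraph.IsPartition P) {v : V}
    {B C : {B : Set V // B ∈ P}} (hv : v ∈ B.1) (hne : B ≠ C) : v ∉ C.1 := by
  intro hv'
  exact hne ((blk_eq P hP hv).symm.trans (blk_eq P hP hv'))

/-- Some `r`-labelled arc leaves `X`. -/
def Leav (Z : DGraph V R) (X : Set V) (r : R) : Prop :=
  ∃ c, c ∉ X ∧ ∃ b ∈ X, Z.out b r = some c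

lemma leav_uniq {Z : DGraph V R} {X : Set V} (hX : Z.IsModule X) {r : R} {b c : V}
    (hb : b ∈ X) (hbc : Z.out b r = some c) (hc : c ∉ X)
    {b' c' : V} (hb' : b' ∈ X) (hbc' : Z.out b' r = some c') (hc' : c' ∉ X) : c = c' := by
  obtain ⟨u, hu, hcase⟩ := hX.2.2 b hb r c hbc hc b' hb'
  rw [hbc'] at hu
  obtain rfl : c' = u := Option.some.inj hu
  rcases hcase with h | h
  · exact h.symm
  · exact absurd h hc'

/-- The block reached by the (unique) `r`-labelled arc leaving block `B`, if any. -/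
noncomputable def tgt (Z : DGraph V R) (P : Set (Set V)) (hP : DGraph.IsPartition P)
    (B : {B : Set V // B ∈ P}) (r : R) : Option {B : Set V // B ∈ P} :=
  if h : Leav Z B.1 r then some (blk P hP h.choose) else none

lemma tgt_eq_some {Z : DGraph V R} {P : Set (Set V)} (hP : DGraph.IsPartition P)
    (hmod : ∀ B ∈ P, Z.IsModule B) {B C : {B : Set V // B ∈ P}} {r : R} :
    tgt Z P hP B r = some C ↔ ∃ b ∈ B.1, ∃ c, Z.out b r = some c ∧ c ∉ B.1 ∧ c ∈ C.1 := by
  constructor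
  · intro h
    rw [tgt] at h
    split_ifs at h with hl
    · obtain ⟨hc, b, hb, hbc⟩ := hl.choose_spec
      refine ⟨b, hb, hl.choose, hbc, hc, ?_⟩
      rw [← Option.some.inj h]
      exact mem_blk P hP _
  · rintro ⟨b, hb, c, hbc, hcB, hcC⟩
    have hl : Leav Z B.1 r := ⟨c, hcB, b, hb, hbc⟩
    rw [tgt, dif_pos hl]
    obtain ⟨hc', b', hb', hbc'⟩ := hl.choose_spec
    have he : hl.choose = c := leav_uniq (hmod B.1 B.2) hb' hbc' hc' hb hbc hcB
    rw [he, blk_eq P hP hcC]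

/-- A chosen label witnessing the quotient arc from `B` to `C`, if any. -/
noncomputable def lab (Z : DGraph V R) (P : Set (Set V)) (hP : DGraph.IsPartition P)
    (B C : {B : Set V // B ∈ P}) : Option R :=
  if h : ∃ r, tgt Z P hP B r = some C then some h.choose else none

lemma lab_eq_some {Z : DGraph V R} {P : Set (Set V)} {hP : DGraph.IsPartition P}
    {B C : {B : Set V // B ∈ P}} {r : R} (h : lab Z P hP B C = some r) :
    tgt Z P hP B r = some C := by
  rw [lab] at h
  split_ifs at h with h'
  obtain rfl : h'.choose = r := Option.some.inj h
  exact h'.choose_spec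

lemma lab_isSome {Z : DGraph V R} {P : Set (Set V)} {hP : DGraph.IsPartition P}
    {B C : {B : Set V // B ∈ P}} (h : ∃ r, tgt Z P hP B r = some C) :
    ∃ r, lab Z P hP B C = some r := by
  exact ⟨h.choose, dif_pos h⟩

/-- The quotient out-map. -/
noncomputable def Qout (Z : DGraph V R) (P : Set (Set V)) (hP : DGraph.IsPartition P)
    (B : {B : Set V // B ∈ P}) (r : R) : Option {B : Set V // B ∈ P} :=
  if h : ∃ C, lab Z P hP B C = some r then some h.choose else none

lemma Qout_eq_some {Z : DGraph V R} {P : Set (Set V)} {hP : DGraph.IsPartition P}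
    {B C : {B : Set V // B ∈ P}} {r : R} :
    Qout Z P hP B r = some C ↔ lab Z P hP B C = some r := by
  constructor
  · intro h
    rw [Qout] at h
    split_ifs at h with h'
    obtain rfl : h'.choose = C := Option.some.inj h
    exact h'.choose_spec
  · intro h
    have h' : ∃ C, lab Z P hP B C = some r := ⟨C, h⟩
    rw [Qout, dif_pos h']
    congr 1
    have t1 := lab_eq_some h'.choose_spec
    have t2 := lab_eq_some h
    rw [t2] at t1
    exact (Option.some.inj t1).symm

/-- In a finite acyclic induced subgraph with unique source, every node is reachable
from the source. -/
lemma reach_from_source {Z : DGraph V R} [Fintype V] {X : Set V}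
    (hacyc : ∀ v, ¬ Relation.TransGen (Z.AdjOn X) v v) {s : V}
    (hs : Z.IsSourceOn X s) (huniq : ∀ t, Z.IsSourceOn X t → t = s) :
    ∀ x ∈ X, Relation.ReflTransGen (Z.AdjOn X) s x := by
  have hirr : IsIrrefl V (Relation.TransGen (Z.AdjOn X)) := ⟨hacyc⟩
  have hwf : WellFounded (Relation.TransGen (Z.AdjOn X)) :=
    Finite.wellFounded_of_trans_of_irrefl _
  have hwf' : WellFounded (Z.AdjOn X) :=
    Subrelation.wf (fun h => Relation.TransGen.single h) hwf
  intro x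
  refine hwf'.induction (C := fun x => x ∈ X → Relation.ReflTransGen (Z.AdjOn X) s x) x ?_
  intro x ih hx
  by_cases hxs : x = s
  · subst hxs; exact Relation.ReflTransGen.refl
  · have hns : ¬ Z.IsSourceOn X x := fun h => hxs (huniq x h)
    rw [DGraph.IsSourceOn] at hns
    push_neg at hns
    obtain ⟨y, hy, r, hyx⟩ := hns hx
    have hadj : Z.AdjOn X y x := ⟨hy, hx, r, hyx⟩
    exact (ih y hadj hy).tail hadj

/-- The local source of a block. -/
noncomputable def msrc (Z : DGraph V R) (P : Set (Set V)) (hmod : ∀ B ∈ P, Z.IsModule B)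
    (B : {B : Set V // B ∈ P}) : V :=
  ((hmod B.1 B.2).1.2).choose

lemma msrc_spec (Z : DGraph V R) (P : Set (Set V)) (hmod : ∀ B ∈ P, Z.IsModule B)
    (B : {B : Set V // B ∈ P}) : Z.IsSourceOn B.1 (msrc Z P hmod B) :=
  ((hmod B.1 B.2).1.2).choose_spec.1

lemma msrc_uniq (Z : DGraph V R) (P : Set (Set V)) (hmod : ∀ B ∈ P, Z.IsModule B)
    (B : {B : Set V // B ∈ P}) {t : V} (h : Z.IsSourceOn B.1 t) : t = msrc Z P hmod B :=
  ((hmod B.1 B.2).1.2).choose_spec.2 t h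

end Aux


/-- The quotient of a decision structure by a modular partition is again
a decision structure: it is acyclic, has a unique source, and all arcs out of a block can
be assigned distinct labels inherited from `Z`. -/
theorem stmt_1 {V R : Type} [Fintype V] (Z : DGraph V R) (hZ : Z.IsDS)
    (P : Set (Set V)) (hP : Z.IsModularPartition P) :
    ∃ Q : DGraph {B : Set V // B ∈ P} R,
      Q.IsDS ∧
      (∀ B C : {B : Set V // B ∈ P}, Q.Adj B C ↔ Z.InterAdj B.1 C.1) ∧
      (∀ (B C : {B : Set V // B ∈ P}) (r : R),
        Q.out B r = some C → ∃ b ∈ B.1, ∃ c ∈ C.1, Z.out b r = some c) := by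
  obtain ⟨hPart, hmod⟩ := hP
  have key : ∀ (B C : {B : Set V // B ∈ P}) (r : R),
      Qout Z P hPart B r = some C →
      ∃ b ∈ B.1, ∃ c, Z.out b r = some c ∧ c ∉ B.1 ∧ c ∈ C.1 :=
    fun B C r h => (tgt_eq_some hPart hmod).mp (lab_eq_some (Qout_eq_some.mp h))
  have adj_iff : ∀ B C, (∃ r, Qout Z P hPart B r = some C) ↔ Z.InterAdj B.1 C.1 := by
    intro B C
    constructor
    · rintro ⟨r, h⟩
      obtain ⟨b, hb, c, hbc, hcB, hcC⟩ := key B C r h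
      refine ⟨fun he => hcB ?_, b, hb, c, hcC, r, hbc⟩
      rw [he]; exact hcC
    · rintro ⟨hne, b, hb, c, hc, r, hbc⟩
      have hcB : c ∉ B.1 := by
        intro hcB
        exact hne (congrArg Subtype.val ((blk_eq P hPart hcB).symm.trans (blk_eq P hPart hc)))
      have ht : tgt Z P hPart B r = some C :=
        (tgt_eq_some hPart hmod).mpr ⟨b, hb, c, hbc, hcB, hc⟩
      obtain ⟨r', hr'⟩ := lab_isSome ⟨r, ht⟩
      exact ⟨r', Qout_eq_some.mpr hr'⟩
  have lift : ∀ B C, (∃ r, Qout Z P hPart B r = some C) →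
      Relation.TransGen Z.Adj (msrc Z P hmod B) (msrc Z P hmod C) := by
    rintro B C ⟨r, h⟩
    obtain ⟨b, hb, c, hbc, hcB, hcC⟩ := key B C r h
    have hBC : B ≠ C := (blocks_ne hPart hcC hcB).symm
    have hbC : b ∉ C.1 := mem_of_ne hPart hb hBC
    have hcsrc : Z.IsSourceOn C.1 c := (hmod C.1 C.2).2.1 b hbC r c hbc hcC
    have hc_eq : c = msrc Z P hmod C := msrc_uniq Z P hmod C hcsrc
    have hreach : Relation.ReflTransGen (Z.AdjOn B.1) (msrc Z P hmod B) b :=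
      reach_from_source (hmod B.1 B.2).1.1 (msrc_spec Z P hmod B)
        (fun t ht => msrc_uniq Z P hmod B ht) b hb
    have hreach' : Relation.ReflTransGen Z.Adj (msrc Z P hmod B) b :=
      Relation.ReflTransGen.mono (fun _ _ h => h.2.2) _ _ hreach
    have hstep : Z.Adj b (msrc Z P hmod C) := by rw [← hc_eq]; exact ⟨r, hbc⟩
    exact Relation.TransGen.tail' hreach' hstep
  have acyc : ∀ B : {B : Set V // B ∈ P},
      ¬ Relation.TransGen (DGraph.Adj ⟨Qout Z P hPart⟩) B B := by
    intro B hcyc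
    have lift' : ∀ {B C : {B : Set V // B ∈ P}},
        Relation.TransGen (DGraph.Adj ⟨Qout Z P hPart⟩) B C →
        Relation.TransGen Z.Adj (msrc Z P hmod B) (msrc Z P hmod C) := by
      intro B C h
      induction h with
      | single h => exact lift _ _ h
      | tail _ h2 ih => exact ih.trans (lift _ _ h2)
    exact hZ.2.1 _ (lift' hcyc)
  obtain ⟨s, hs, hsu⟩ := hZ.2.2
  have hs_on : Z.IsSourceOn (blk P hPart s).1 s :=
    ⟨mem_blk P hPart s, fun v _ r' => hs v r'⟩
  have hSsrc : ∀ (C : {B : Set V // B ∈ P}) (r : R),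
      Qout Z P hPart C r ≠ some (blk P hPart s) := by
    intro C r h
    obtain ⟨b, hb, c, hbc, hcC, hcS⟩ := key C (blk P hPart s) r h
    have hCS : C ≠ blk P hPart s := (blocks_ne hPart hcS hcC).symm
    have hbS : b ∉ (blk P hPart s).1 := mem_of_ne hPart hb hCS
    have hcsrc : Z.IsSourceOn (blk P hPart s).1 c :=
      (hmod _ (blk P hPart s).2).2.1 b hbS r c hbc hcS
    have hcs : c = s :=
      (msrc_uniq Z P hmod (blk P hPart s) hcsrc).trans
        (msrc_uniq Z P hmod (blk P hPart s) hs_on).symm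
    exact hs b r (hcs ▸ hbc)
  have hQuniq : ∀ B : {B : Set V // B ∈ P},
      (∀ (C : {B : Set V // B ∈ P}) (r : R), Qout Z P hPart C r ≠ some B) →
      B = blk P hPart s := by
    intro B hB
    by_contra hne
    have htB : msrc Z P hmod B ∈ B.1 := (msrc_spec Z P hmod B).1
    have hts : msrc Z P hmod B ≠ s := by
      intro h
      exact hne ((blk_eq P hPart (h ▸ htB)).symm)
    have hnsrc : ¬ Z.IsSource (msrc Z P hmod B) := fun h => hts (hsu _ h)
    rw [DGraph.IsSource] at hnsrc
    push_neg at hnsrc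
    obtain ⟨v, r, hvt⟩ := hnsrc
    have hvB : v ∉ B.1 := fun hv => (msrc_spec Z P hmod B).2 v hv r hvt
    have hIA : Z.InterAdj (blk P hPart v).1 B.1 := by
      refine ⟨fun he => hvB ?_, v, mem_blk P hPart v, msrc Z P hmod B, htB, r, hvt⟩
      rw [← he]; exact mem_blk P hPart v
    obtain ⟨r', hr'⟩ := (adj_iff (blk P hPart v) B).mpr hIA
    exact hB _ r' hr'
  refine ⟨⟨Qout Z P hPart⟩, ⟨?_, acyc, blk P hPart s, hSsrc, hQuniq⟩, adj_iff, ?_⟩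
  · intro B r₁ r₂ C h1 h2
    exact Option.some.inj ((Qout_eq_some.mp h1).symm.trans (Qout_eq_some.mp h2))
  · intro B C r h
    obtain ⟨b, hb, c, hbc, hcB, hcC⟩ := key B C r h
    exact ⟨b, hb, c, hcC, hbc⟩
end

section
/- If Z is a decision structure and P is a maximal modular partition (every block is a maximal module, i.e., a proper module contained in no other module except N(Z)), then the quotient Z/P is prime: its only modules are the trivial ones (singletons and the whole node set). -/
namespace DGraph

variable {V R : Type}

lemma exists_sinkOn [Fintype V] (Z : DGraph V R) {M : Set V}
    (hacy : ∀ v, ¬ Relation.TransGen (Z.AdjOn M) v v) {m : V} (hm : m ∈ M) :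
    ∃ y ∈ M, ∀ w ∈ M, ¬ Z.Adj y w := by
  classical
  let r : V → V → Prop := flip (Relation.TransGen (Z.AdjOn M))
  haveI : IsTrans V r := ⟨fun a b c hab hbc => Relation.TransGen.trans hbc hab⟩
  haveI : IsIrrefl V r := ⟨fun a ha => hacy a ha⟩
  have wf : WellFounded r := Finite.wellFounded_of_trans_of_irrefl r
  obtain ⟨y, hyM, hmin⟩ := wf.has_min M ⟨m, hm⟩
  refine ⟨y, hyM, fun w hw hadj => hmin w hw ?_⟩
  exact Relation.TransGen.single ⟨hyM, hw, hadj⟩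

lemma unique_exit_label [Fintype V] (Z : DGraph V R)
    (hpar : ∀ v r₁ r₂ w, Z.out v r₁ = some w → Z.out v r₂ = some w → r₁ = r₂)
    {M : Set V} (hM : Z.IsModule M) {x₁ x₂ : V} {r₁ r₂ : R} {v : V}
    (hx₁ : x₁ ∈ M) (hx₂ : x₂ ∈ M) (hv : v ∉ M)
    (h₁ : Z.out x₁ r₁ = some v) (h₂ : Z.out x₂ r₂ = some v) : r₁ = r₂ := by
  obtain ⟨s, hs, _⟩ := hM.1.2
  obtain ⟨y, hyM, hsink⟩ := Z.exists_sinkOn hM.1.1 hs.1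
  obtain ⟨u₁, hu₁, hc₁⟩ := hM.2.2 x₁ hx₁ r₁ v h₁ hv y hyM
  obtain ⟨u₂, hu₂, hc₂⟩ := hM.2.2 x₂ hx₂ r₂ v h₂ hv y hyM
  have e₁ : u₁ = v := by
    rcases hc₁ with h | h
    · exact h
    · exact absurd ⟨r₁, hu₁⟩ (hsink u₁ h)
  have e₂ : u₂ = v := by
    rcases hc₂ with h | h
    · exact h
    · exact absurd ⟨r₂, hu₂⟩ (hsink u₂ h)
  exact hpar y r₁ r₂ v (e₁ ▸ hu₁) (e₂ ▸ hu₂)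

end DGraph

/-- The quotient of a decision structure by a maximal modular partition
is prime: its only modules are singletons and the whole node set. -/
theorem stmt_2 {V R : Type} [Fintype V] (Z : DGraph V R) (hZ : Z.IsDS)
    (P : Set (Set V)) (hP : Z.IsModularPartition P)
    (hmax : ∀ B ∈ P, Z.IsMaximalModule B)
    (Q : DGraph {B : Set V // B ∈ P} R)
    (hQDS : Q.IsDS)
    (hQadj : ∀ B C : {B : Set V // B ∈ P}, Q.Adj B C ↔ Z.InterAdj B.1 C.1)
    (hQlab : ∀ (B C : {B : Set V // B ∈ P}) (r : R),
      Q.out B r = some C → ∃ b ∈ B.1, ∃ c ∈ C.1, Z.out b r = some c) :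
    ∀ Y : Set {B : Set V // B ∈ P},
      Q.IsModule Y → (∃ B, Y = {B}) ∨ Y = Set.univ := by
  classical
  intro Y hY
  by_contra hcon
  push_neg at hcon
  obtain ⟨hsing, huniv⟩ := hcon
  -- the block of each vertex
  have hpart : ∀ v : V, ∃ B, (B ∈ P ∧ v ∈ B) ∧ ∀ C, C ∈ P ∧ v ∈ C → C = B := hP.1
  choose blk hblk hbuniq using hpart
  have hblkP : ∀ v, blk v ∈ P := fun v => (hblk v).1
  have hblkmem : ∀ v, v ∈ blk v := fun v => (hblk v).2
  have hf : True := trivial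
  let f : V → {B : Set V // B ∈ P} := fun v => ⟨blk v, hblkP v⟩
  have hfmem : ∀ v, v ∈ (f v).1 := fun v => hblkmem v
  have hfeq : ∀ (v : V) (B : {B : Set V // B ∈ P}), v ∈ B.1 → f v = B := by
    intro v B hvB
    exact Subtype.ext (hbuniq v B.1 ⟨B.2, hvB⟩).symm
  have hdisj : ∀ (B C : {B : Set V // B ∈ P}) (v : V), v ∈ B.1 → v ∈ C.1 → B = C := by
    intro B C v hvB hvC
    exact (hfeq v B hvB).symm.trans (hfeq v C hvC)
  -- block modules and their sources
  have hmodB : ∀ B : {B : Set V // B ∈ P}, Z.IsModule B.1 := fun B => hP.2 B.1 B.2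
  choose src hsrc hsrcu using fun B : {B : Set V // B ∈ P} => (hmodB B).1.2
  have hinto : ∀ (B : {B : Set V // B ∈ P}) (v : V), v ∉ B.1 → ∀ r w,
      Z.out v r = some w → w ∈ B.1 → w = src B := by
    intro B v hv r w hout hw
    exact hsrcu B w ((hmodB B).2.1 v hv r w hout hw)
  -- Y pieces
  obtain ⟨⟨hYacy, hYsrc⟩, hYin, hYout⟩ := hY
  obtain ⟨S, hSsrc, hSuniq⟩ := hYsrc
  have hQne : ∀ (C : {B : Set V // B ∈ P}) (r : R) (E : {B : Set V // B ∈ P}),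
      Q.out C r = some E → E ≠ C := by
    intro C r E h hEC
    exact hQDS.2.1 C (Relation.TransGen.single ⟨r, hEC ▸ h⟩)
  -- the union of the blocks of Y
  let X : Set V := {v | f v ∈ Y}
  have hXmem : ∀ (v : V) (B : {B : Set V // B ∈ P}), v ∈ B.1 → B ∈ Y → v ∈ X := by
    intro v B hvB hBY
    show f v ∈ Y
    rw [hfeq v B hvB]; exact hBY
  have hsubX : ∀ B : {B : Set V // B ∈ P}, B ∈ Y → B.1 ⊆ X :=
    fun B hBY v hv => hXmem v B hv hBY
  -- source of X
  have hs₀ : Z.IsSourceOn X (src S) := by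
    refine ⟨hXmem _ S (hsrc S).1 hSsrc.1, ?_⟩
    intro v hvX r hout
    by_cases hC : f v = S
    · exact (hsrc S).2 v (hC ▸ hfmem v) r hout
    · have hQA : Q.Adj (f v) S := by
        rw [hQadj]
        exact ⟨fun h => hC (Subtype.ext h), v, hfmem v, src S, (hsrc S).1, r, hout⟩
      obtain ⟨r', hr'⟩ := hQA
      exact hSsrc.2 (f v) hvX r' hr'
  have hs₀u : ∀ t, Z.IsSourceOn X t → t = src S := by
    intro t ht
    have htX : t ∈ X := ht.1
    have htC : t = src (f t) := by
      apply hsrcu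
      exact ⟨hfmem t, fun v hv r => ht.2 v (hsubX (f t) htX hv) r⟩
    by_cases hC : f t = S
    · rw [htC, hC]
    · exfalso
      have hnot : ¬ Q.IsSourceOn Y (f t) := fun h => hC (hSuniq (f t) h)
      rw [DGraph.IsSourceOn] at hnot
      push_neg at hnot
      obtain ⟨D, hDY, r, hDr⟩ := hnot htX
      obtain ⟨d, hd, c, hc, hdc⟩ := hQlab D (f t) r hDr
      have hdn : d ∉ (f t).1 := fun h => (hQne D r (f t) hDr) (hdisj (f t) D d h hd)
      have hcsrc : c = src (f t) := hinto (f t) d hdn r c hdc hc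
      have hdX : d ∈ X := hXmem d D hd hDY
      refine ht.2 d hdX r ?_
      rw [hdc, hcsrc, ← htC]
  -- X is acyclic
  have hXacy : ∀ v, ¬ Relation.TransGen (Z.AdjOn X) v v := by
    intro v hv
    exact hZ.2.1 v (Relation.TransGen.mono (fun a b (h : Z.AdjOn X a b) => h.2.2) v v hv)
  -- incoming condition for X
  have hXin : ∀ v, v ∉ X → ∀ r w, Z.out v r = some w → w ∈ X → Z.IsSourceOn X w := by
    intro v hvX r w hvw hwX
    have hwY : f w ∈ Y := hwX
    have hvC : v ∉ (f w).1 := fun h => hvX (show f v ∈ Y by rw [hfeq v (f w) h]; exact hwY)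
    have hwsrc : w = src (f w) := hinto (f w) v hvC r w hvw (hfmem w)
    have hQA : Q.Adj (f v) (f w) := by
      rw [hQadj]
      exact ⟨fun h => hvX (show f v ∈ Y by rw [Subtype.ext h]; exact hwY),
        v, hfmem v, w, hfmem w, r, hvw⟩
    obtain ⟨s, hs⟩ := hQA
    have hCsrc : Q.IsSourceOn Y (f w) := hYin (f v) hvX s (f w) hs hwY
    have hfwS : f w = S := hSuniq (f w) hCsrc
    rw [hwsrc, hfwS]
    exact hs₀
  -- outgoing condition for X
  have hXout : ∀ x ∈ X, ∀ r v, Z.out x r = some v → v ∉ X →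
      ∀ y ∈ X, ∃ u, Z.out y r = some u ∧ (u = v ∨ u ∈ X) := by
    intro x hxX r v hxv hvX y hyX
    have hBY : f x ∈ Y := hxX
    have hDY : f v ∉ Y := hvX
    have hvB : v ∉ (f x).1 := fun h => hvX (hXmem v (f x) h hBY)
    have hxD : x ∉ (f v).1 := fun h => hDY ((hdisj (f x) (f v) x (hfmem x) h) ▸ hBY)
    have hvsrc : v = src (f v) := hinto (f v) x hxD r v hxv (hfmem v)
    by_cases hyB : f y = f x
    · obtain ⟨u, hu, hcase⟩ :=
        (hmodB (f x)).2.2 x (hfmem x) r v hxv hvB y (hyB ▸ hfmem y)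
      exact ⟨u, hu, hcase.imp id (fun h => hsubX (f x) hBY h)⟩
    · have hCY : f y ∈ Y := hyX
      have hQBD : Q.Adj (f x) (f v) := by
        rw [hQadj]
        exact ⟨fun h => hDY (Subtype.ext h ▸ hBY), x, hfmem x, v, hfmem v, r, hxv⟩
      obtain ⟨s, hs⟩ := hQBD
      obtain ⟨b, hb, d, hd, hbd⟩ := hQlab (f x) (f v) s hs
      have hbD : b ∉ (f v).1 := fun h => hDY ((hdisj (f x) (f v) b hb h) ▸ hBY)
      have hdsrc : d = src (f v) := hinto (f v) b hbD s d hbd hd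
      have hrs : r = s :=
        Z.unique_exit_label hZ.1 (hmodB (f x)) (hfmem x) hb hvB hxv
          (by rw [hbd, hdsrc, ← hvsrc])
      have hsr : Q.out (f x) r = some (f v) := by rw [hrs]; exact hs
      obtain ⟨E, hE, hEcase⟩ := hYout (f x) hBY r (f v) hsr hDY (f y) hCY
      have hEC : E ≠ f y := hQne (f y) r E hE
      obtain ⟨c, hc, e, he, hce⟩ := hQlab (f y) E r hE
      have hesrc : e = src E := hinto E c (fun h => hEC (hdisj E (f y) c h hc)) r e hce he
      have heC : e ∉ (f y).1 := fun h => hEC (hdisj E (f y) e he h)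
      obtain ⟨u, hu, hucase⟩ := (hmodB (f y)).2.2 c hc r e hce heC y (hfmem y)
      refine ⟨u, hu, ?_⟩
      rcases hucase with h | h
      · rcases hEcase with hED | hEY
        · left; rw [h, hesrc, hED, ← hvsrc]
        · right; exact hXmem u E (h ▸ he) hEY
      · right; exact hXmem u (f y) h hyX
  have hXmod : Z.IsModule X := ⟨⟨hXacy, ⟨src S, hs₀, hs₀u⟩⟩, hXin, hXout⟩
  -- conclude via maximality of the block S
  have hSY : S ∈ Y := hSsrc.1
  have hYneS : Y ≠ {S} := hsing S
  obtain ⟨C₀, hC₀Y, hC₀ne⟩ : ∃ C₀ ∈ Y, C₀ ≠ S := by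
    by_contra h
    push_neg at h
    exact hYneS (Set.eq_singleton_iff_unique_mem.2 ⟨hSY, h⟩)
  have hSsub : S.1 ⊆ X := hsubX S hSY
  rcases (hmax S.1 S.2).2.2 X hXmod hSsub with hXS | hXu
  · have hcX : src C₀ ∈ X := hXmem (src C₀) C₀ (hsrc C₀).1 hC₀Y
    rw [hXS] at hcX
    exact hC₀ne (hdisj C₀ S (src C₀) (hsrc C₀).1 hcX)
  · apply huniv
    apply Set.eq_univ_of_forall
    intro D
    have hD : src D ∈ X := by rw [hXu]; exact Set.mem_univ _
    have hfD : f (src D) ∈ Y := hD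
    rwa [hfeq (src D) D (hsrc D).1] at hfD
end

section
/- Let Z be a decision structure, Y a module of Z, and X a subset of Y. Then X is a module of Z if and only if X is a module of the induced subgraph Z[Y]. -/
namespace DGraph

variable {V R : Type}

open Classical in
/-- The induced subgraph `Z[X]`: only arcs with both endpoints in `X` are kept. -/
noncomputable def induce (Z : DGraph V R) (X : Set V) : DGraph V R :=
  ⟨fun v r =>
    match Z.out v r with
    | some w => if v ∈ X ∧ w ∈ X then some w else none
    | none => none⟩

end DGraph


namespace DGraph

variable {V R : Type}

lemma induce_out_some {Z : DGraph V R} {Y : Set V} {v w : V} {r : R} :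
    (Z.induce Y).out v r = some w ↔ Z.out v r = some w ∧ v ∈ Y ∧ w ∈ Y := by
  simp only [induce]
  rcases h : Z.out v r with _ | u
  · simp [h]
  · by_cases hc : v ∈ Y ∧ u ∈ Y
    · simp only [h]; rw [if_pos hc]; simp only [h, Option.some_inj]
      constructor
      · rintro rfl; exact ⟨rfl, hc⟩
      · rintro ⟨h1, -, -⟩; exact h1
    · simp only [h]; rw [if_neg hc]; simp only [h, Option.some_inj]
      constructor
      · rintro ⟨⟩
      · rintro ⟨rfl, h2, h3⟩; exact absurd ⟨h2, h3⟩ hc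

lemma adjOn_induce {Z : DGraph V R} {Y X : Set V} (hXY : X ⊆ Y) :
    (Z.induce Y).AdjOn X = Z.AdjOn X := by
  ext v w
  simp only [AdjOn, Adj, induce_out_some]
  constructor
  · rintro ⟨h1, h2, r, h3, -, -⟩; exact ⟨h1, h2, r, h3⟩
  · rintro ⟨h1, h2, r, h3⟩; exact ⟨h1, h2, r, h3, hXY h1, hXY h2⟩

lemma sourceOn_induce {Z : DGraph V R} {Y X : Set V} (hXY : X ⊆ Y) :
    (Z.induce Y).IsSourceOn X = Z.IsSourceOn X := by
  ext s
  simp only [IsSourceOn]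
  refine and_congr_right fun hs => ?_
  constructor
  · intro h v hv r hc
    exact h v hv r (induce_out_some.mpr ⟨hc, hXY hv, hXY hs⟩)
  · intro h v hv r hc
    exact h v hv r (induce_out_some.mp hc).1

end DGraph

/-- For `Y` a module of `Z` and `X ⊆ Y`: `X` is a module of `Z` iff `X`
is a module of the induced subgraph `Z[Y]`. -/
theorem stmt_3 {V R : Type} [Fintype V] (Z : DGraph V R) (hZ : Z.IsDS)
    (Y X : Set V) (hY : Z.IsModule Y) (hXY : X ⊆ Y) :
    Z.IsModule X ↔ (Z.induce Y).IsModule X := by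
  obtain ⟨hYds, hYin, hYout⟩ := hY
  have hDS : Z.IsDSOn X ↔ (Z.induce Y).IsDSOn X := by
    unfold DGraph.IsDSOn
    rw [DGraph.adjOn_induce hXY, DGraph.sourceOn_induce hXY]
  constructor
  · rintro ⟨h1, h2, h3⟩
    refine ⟨hDS.mp h1, ?_, ?_⟩
    · intro v hv r w hw hwX
      rw [DGraph.sourceOn_induce hXY]
      exact h2 v hv r w (DGraph.induce_out_some.mp hw).1 hwX
    · intro x hx r v hv hvX y hy
      have hv' := DGraph.induce_out_some.mp hv
      obtain ⟨u, hu, hcase⟩ := h3 x hx r v hv'.1 hvX y hy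
      refine ⟨u, DGraph.induce_out_some.mpr ⟨hu, hXY hy, ?_⟩, hcase⟩
      rcases hcase with rfl | h
      · exact hv'.2.2
      · exact hXY h
  · rintro ⟨h1, h2, h3⟩
    refine ⟨hDS.mpr h1, ?_, ?_⟩
    · intro v hv r w hw hwX
      by_cases hvY : v ∈ Y
      · have := h2 v hv r w (DGraph.induce_out_some.mpr ⟨hw, hvY, hXY hwX⟩) hwX
        rwa [DGraph.sourceOn_induce hXY] at this
      · have := hYin v hvY r w hw (hXY hwX)
        exact ⟨hwX, fun u hu r' => this.2 u (hXY hu) r'⟩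
    · intro x hx r v hv hvX y hy
      by_cases hvY : v ∈ Y
      · obtain ⟨u, hu, hcase⟩ :=
          h3 x hx r v (DGraph.induce_out_some.mpr ⟨hv, hXY hx, hvY⟩) hvX y hy
        exact ⟨u, (DGraph.induce_out_some.mp hu).1, hcase⟩
      · obtain ⟨u, hu, hcase⟩ := hYout x (hXY hx) r v hv hvY y (hXY hy)
        refine ⟨u, hu, ?_⟩
        rcases hcase with rfl | huY
        · exact Or.inl rfl
        · by_cases huX : u ∈ X
          · exact Or.inr huX
          · exfalso
            obtain ⟨u', hu', hc'⟩ :=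
              h3 y hy r u (DGraph.induce_out_some.mpr ⟨hu, hXY hy, huY⟩) huX x hx
            have := DGraph.induce_out_some.mp hu'
            rw [hv] at this
            obtain rfl := Option.some_inj.mp this.1.symm
            exact hvY this.2.2
end

section
/- In any decision structure Z, if two maximal modules M1 and M2 intersect non-trivially (neither contains the other and their intersection is nonempty), then exactly one of their sources lies in the intersection M1 ∩ M2. -/
namespace DGraph

variable {V R : Type}

lemma wf_of_acyclic [Finite V] (r : V → V → Prop)
    (h : ∀ v, ¬ Relation.TransGen r v v) : WellFounded r := by
  haveI : IsTrans V (Relation.TransGen r) := ⟨fun _ _ _ => Relation.TransGen.trans⟩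
  haveI : IsIrrefl V (Relation.TransGen r) := ⟨h⟩
  exact Subrelation.wf (fun {x y} hxy => Relation.TransGen.single hxy)
    (Finite.wellFounded_of_trans_of_irrefl _)

/-- In a finite induced decision structure, every node is the source or reachable
from the source. -/
lemma reach [Finite V] (Z : DGraph V R) (X : Set V) (hDS : Z.IsDSOn X)
    (s : V) (hs : Z.IsSourceOn X s) :
    ∀ x ∈ X, x = s ∨ Relation.TransGen (Z.AdjOn X) s x := by
  have hwf := wf_of_acyclic (Z.AdjOn X) hDS.1
  intro x
  induction x using hwf.induction with
  | _ x ih =>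
    intro hx
    by_cases hxs : x = s
    · exact Or.inl hxs
    right
    have hnot : ¬ Z.IsSourceOn X x := by
      intro hxsrc
      obtain ⟨s', _, hu⟩ := hDS.2
      exact hxs ((hu x hxsrc).trans (hu s hs).symm)
    have hex : ∃ v ∈ X, ∃ r, Z.out v r = some x := by
      by_contra hcon
      push_neg at hcon
      exact hnot ⟨hx, hcon⟩
    obtain ⟨v, hv, r, hvr⟩ := hex
    have hadj : Z.AdjOn X v x := ⟨hv, hx, r, hvr⟩
    rcases ih v hadj hv with h | h
    · exact Relation.TransGen.single (h ▸ hadj)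
    · exact h.tail hadj

/-- Along a path in `X` from a point satisfying `Q` to a point not satisfying `Q`,
some arc of the path crosses out of `Q`. -/
lemma cross (Z : DGraph V R) (X : Set V) (Q : V → Prop) {a b : V}
    (h : Relation.TransGen (Z.AdjOn X) a b) (ha : Q a) :
    ¬ Q b → ∃ x y r, x ∈ X ∧ y ∈ X ∧ Q x ∧ ¬ Q y ∧ Z.out x r = some y := by
  induction h with
  | single h1 =>
    intro hb
    obtain ⟨hx, hy, r, hr⟩ := h1
    exact ⟨a, _, r, hx, hy, ha, hb, hr⟩
  | @tail b' c h1 h2 ih =>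
    intro hb
    obtain ⟨hx, hy, r, hr⟩ := h2
    by_cases hQ : Q b'
    · exact ⟨b', c, r, hx, hy, hQ, hb, hr⟩
    · exact ih hQ

end DGraph

/-- If two maximal modules of a decision structure intersect
non-trivially (neither contains the other, nonempty intersection), then exactly one of
their sources lies in the intersection. -/
theorem stmt_4 {V R : Type} [Fintype V] (Z : DGraph V R) (hZ : Z.IsDS)
    (M1 M2 : Set V) (hM1 : Z.IsMaximalModule M1) (hM2 : Z.IsMaximalModule M2)
    (hne : (M1 ∩ M2).Nonempty) (h12 : ¬ M1 ⊆ M2) (h21 : ¬ M2 ⊆ M1)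
    (s1 s2 : V) (hs1 : Z.IsSourceOn M1 s1) (hs2 : Z.IsSourceOn M2 s2) :
    Xor' (s1 ∈ M1 ∩ M2) (s2 ∈ M1 ∩ M2) := by
  classical
  have hDS1 := hM1.1.1
  have hDS2 := hM2.1.1
  have hs1M1 := hs1.1
  have hs2M2 := hs2.1
  have uniq1 : ∀ w, Z.IsSourceOn M1 w → w = s1 := by
    obtain ⟨t, _, hu⟩ := hDS1.2
    intro w hw; exact (hu w hw).trans (hu s1 hs1).symm
  have uniq2 : ∀ w, Z.IsSourceOn M2 w → w = s2 := by
    obtain ⟨t, _, hu⟩ := hDS2.2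
    intro w hw; exact (hu w hw).trans (hu s2 hs2).symm
  -- Claim A: at least one source lies in the intersection.
  have hA : s1 ∈ M2 ∨ s2 ∈ M1 := by
    by_contra hcon
    push_neg at hcon
    obtain ⟨h1, h2⟩ := hcon
    obtain ⟨x, hx1, hx2⟩ := hne
    have hxs : x ≠ s1 := fun h => h1 (h ▸ hx2)
    rcases Z.reach M1 hDS1 s1 hs1 x hx1 with h | h
    · exact hxs h
    · obtain ⟨v, w, r, hvM1, hwM1, hv2, hw2, hr⟩ :=
        Z.cross M1 (fun z => z ∉ M2) h h1 (not_not_intro hx2)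
      have hw2' : w ∈ M2 := not_not.mp hw2
      have hsrc : Z.IsSourceOn M2 w := hM2.1.2.1 v hv2 r w hr hw2'
      exact h2 ((uniq2 w hsrc) ▸ hwM1)
  -- Claim B: not both sources lie in the intersection.
  have hB : ¬ (s1 ∈ M2 ∧ s2 ∈ M1) := by
    rintro ⟨h1, h2⟩
    by_cases hss : s1 = s2
    · -- common source: derive an `r`-arc self-map of `M2 \ M1`, contradicting acyclicity
      obtain ⟨a, haM1, haM2⟩ := Set.not_subset.mp h12
      have has : a ≠ s1 := fun h => haM2 (h ▸ h1)
      rcases Z.reach M1 hDS1 s1 hs1 a haM1 with h | h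
      · exact has h
      obtain ⟨x, y, r, hxM1, hyM1, hx2, hy2, hr⟩ :=
        Z.cross M1 (fun z => z ∈ M2) h h1 haM2
      have hout := hM2.1.2.2 x hx2 r y hr hy2
      have key : ∀ b ∈ M2 \ M1, ∃ u ∈ M2 \ M1, Z.Adj b u := by
        rintro b ⟨hb2, hb1⟩
        obtain ⟨u, hu, hcase⟩ := hout b hb2
        rcases hcase with rfl | hu2
        · -- u = y : arc from outside M1 into M1 hits the source s1 ∈ M2, but y ∉ M2
          have hsrc : Z.IsSourceOn M1 u := hM1.1.2.1 b hb1 r u hu hyM1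
          exact absurd ((uniq1 u hsrc) ▸ h1) hy2
        · refine ⟨u, ⟨hu2, ?_⟩, r, hu⟩
          intro hu1
          have heq : u = s1 := uniq1 u (hM1.1.2.1 b hb1 r u hu hu1)
          rw [heq, hss] at hu
          exact hs2.2 b hb2 r hu
      have hwfflip : WellFounded (fun a b : V => Z.Adj b a) := by
        apply DGraph.wf_of_acyclic
        intro v hv
        exact hZ.2.1 v (Relation.transGen_swap.mp hv)
      obtain ⟨b0, hb02, hb01⟩ := Set.not_subset.mp h21
      obtain ⟨m, hm, hmin⟩ := hwfflip.has_min (M2 \ M1) ⟨b0, hb02, hb01⟩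
      obtain ⟨u, hu, hadj⟩ := key m hm
      exact hmin u hu hadj
    · -- distinct sources each in the other module: a cycle
      have p1 : Relation.TransGen Z.Adj s1 s2 := by
        rcases Z.reach M1 hDS1 s1 hs1 s2 h2 with h | h
        · exact absurd h.symm hss
        · exact Relation.TransGen.mono (fun a b hab => hab.2.2) _ _ h
      have p2 : Relation.TransGen Z.Adj s2 s1 := by
        rcases Z.reach M2 hDS2 s2 hs2 s1 h1 with h | h
        · exact absurd h hss
        · exact Relation.TransGen.mono (fun a b hab => hab.2.2) _ _ h
      exact hZ.2.1 s1 (p1.trans p2)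
  rcases hA with h | h
  · exact Or.inl ⟨⟨hs1M1, h⟩, fun hc => hB ⟨h, hc.1⟩⟩
  · exact Or.inr ⟨⟨h, hs2M2⟩, fun hc => hB ⟨hc.2, h⟩⟩
end

section
/- Let M : W → Δ be an action selection mechanism over actions Δ = {α_1,...,α_n}, and suppose LTL formulas φ_1,...,φ_n are each equivalent to the corresponding action α_i (φ_i holds on a state sequence starting at w iff the suffix is a possible world trajectory under the signal α_i produces at w). Then the LTL formula Ψ_M = (M⁻¹(α_1) ∧ φ_1) ∨ ... ∨ (M⁻¹(α_n) ∧ φ_n), where M⁻¹(α_i) is the Boolean predicate on states defining when M selects α_i, is equivalent to the derived action (M_B, M_R) of M. -/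
/-- An action: a behavior `b` (producing a signal in `S` from a state in `W`) together
with a return-value function `ret : W → R`. -/
structure Act (W S R : Type) where
  b : W → S
  ret : W → R

/-- An LTL formula `φ` (a set of infinite state sequences) models the action `a`, with
respect to the world `Wld` (which assigns to each signal and current state the set of
possible subsequent state sequences): `φ` holds on every state sequence whose tail is a
possible world trajectory under the signal `a` produces at the first state. -/
def ModelsA {W S R : Type} (Wld : S → W → Set (ℕ → W))
    (φ : (ℕ → W) → Prop) (a : Act W S R) : Prop :=
  ∀ σ : ℕ → W, (fun k => σ (k + 1)) ∈ Wld (a.b (σ 0)) (σ 0) → φ σ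

/-- `φ` is equivalent to the action `a`: it models `a` and conversely. -/
def EquivA {W S R : Type} (Wld : S → W → Set (ℕ → W))
    (φ : (ℕ → W) → Prop) (a : Act W S R) : Prop :=
  ∀ σ : ℕ → W, ((fun k => σ (k + 1)) ∈ Wld (a.b (σ 0)) (σ 0)) ↔ φ σ

/-- Let `M` be an action selection mechanism over actions
`α_1, …, α_n` (its selection depends only on finitely many return-value predicates) and
let `φ_i` be LTL formulas equivalent to the `α_i`. Then
`Ψ_M = ⋁ i, (M⁻¹(α_i) ∧ φ_i)` is equivalent to the derived action `(M_B, M_R)` of `M`. -/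
theorem stmt_17 {W S R : Type} (Wld : S → W → Set (ℕ → W)) (n : ℕ)
    (acts : Fin n → Act W S R) (M : W → Fin n)
    (hASM : ∃ Xs : Finset R, ∀ w1 w2 : W,
      (∀ i : Fin n, ∀ r ∈ Xs, ((acts i).ret w1 = r ↔ (acts i).ret w2 = r)) →
      M w1 = M w2)
    (φ : Fin n → (ℕ → W) → Prop)
    (heq : ∀ i, EquivA Wld (φ i) (acts i)) :
    EquivA Wld (fun σ => ∃ i, M (σ 0) = i ∧ φ i σ)
      ⟨fun w => (acts (M w)).b w, fun w => (acts (M w)).ret w⟩ := by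
  intro σ
  constructor
  · intro h
    exact ⟨M (σ 0), rfl, (heq (M (σ 0)) σ).mp h⟩
  · rintro ⟨i, hi, hφ⟩
    have := (heq i σ).mpr hφ
    simpa [hi] using this
end

section
/- Let Z be a decision structure with node v labelled by action α whose out-arcs carry labels r_1,...,r_m, and let β be another action with LTL models φ_α, φ_β respectively. If (i) φ_β entails φ_α and (ii) for all states w and all i, α_R(w) = r_i iff β_R(w) = r_i, then replacing α by β at v yields a structure Z' such that for every action γ the selection preimages agree, Z'⁻¹(γ) = Z⁻¹(γ) (with α mapped to β), and consequently if Z satisfies a specification φ under the LTL verification scheme (□Ψ_Z ⊨ φ), then so does Z' (□Ψ_{Z'} ⊨ φ). In particular this predicate is a sufficient condition for actions. -/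
namespace DGraph

variable {V R : Type}

/-- `Reaches Z ret v x`: starting at `v` and repeatedly following the out-arc labelled
by the current node's return value (given by `ret`), one reaches `x`. -/
inductive Reaches (Z : DGraph V R) (ret : V → R) : V → V → Prop
  | refl (v : V) : Reaches Z ret v v
  | step {v w x : V} : Z.out v (ret v) = some w → Reaches Z ret w x → Reaches Z ret v x

/-- `x` is the node selected by the decision structure `Z` under the return-value
assignment `ret`: it is reached from the source and its return value matches no out-arc. -/
def SelectsFrom (Z : DGraph V R) (ret : V → R) (x : V) : Prop :=
  ∃ s, Z.IsSource s ∧ Z.Reaches ret s x ∧ Z.out x (ret x) = none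

end DGraph

/-- Replacing an action `α = lab v0` by `β` with (i) `φ_β ⊨ φ_α` and
(ii) identical return values on the labels of the out-arcs of `v0`, preserves the
selection preimages of the structure and preserves all specifications verified under the
LTL scheme `□Ψ_Z ⊨ ψ`. -/
theorem stmt_19 {V R W S : Type} [Fintype V] [DecidableEq V]
    (Wld : S → W → Set (ℕ → W))
    (Z : DGraph V R) (hZ : Z.IsDS) (lab : V → Act W S R)
    (v0 : V) (β : Act W S R)
    (φm : V → (ℕ → W) → Prop) (φβ : (ℕ → W) → Prop)
    (hmods : ∀ x : V, ModelsA Wld (φm x) (lab x))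
    (hβ : ModelsA Wld φβ β)
    (hent : ∀ σ : ℕ → W, φβ σ → φm v0 σ)
    (hret : ∀ (w : W) (r : R), (Z.out v0 r).isSome →
      ((lab v0).ret w = r ↔ β.ret w = r))
    (lab' : V → Act W S R)
    (hlab' : ∀ u : V, lab' u = if u = v0 then β else lab u) :
    (∀ (w : W) (x : V),
      Z.SelectsFrom (fun u => (lab u).ret w) x ↔
      Z.SelectsFrom (fun u => (lab' u).ret w) x) ∧
    (∀ ψ : (ℕ → W) → Prop,
      (∀ σ : ℕ → W,
        (∀ i : ℕ, ∃ x : V, Z.SelectsFrom (fun u => (lab u).ret (σ i)) x ∧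
          φm x (fun k => σ (i + k))) → ψ σ) →
      (∀ σ : ℕ → W,
        (∀ i : ℕ, ∃ x : V, Z.SelectsFrom (fun u => (lab' u).ret (σ i)) x ∧
          (if x = v0 then φβ else φm x) (fun k => σ (i + k))) → ψ σ)) := by
  have key : ∀ (w : W) (u : V), Z.out u ((lab' u).ret w) = Z.out u ((lab u).ret w) := by
    intro w u
    rw [hlab' u]
    by_cases h : u = v0
    · subst h
      rw [if_pos rfl]
      rcases h1 : Z.out u ((lab u).ret w) with _ | x
      · rcases h2 : Z.out u (β.ret w) with _ | y
        · rfl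
        · have hb := (hret w (β.ret w) (by rw [h2]; rfl)).mpr rfl
          rw [hb] at h1
          rw [h1] at h2
          exact absurd h2 (by simp)
      · have hb := (hret w ((lab u).ret w) (by rw [h1]; rfl)).mp rfl
        rw [hb, h1]
    · simp [h]
  have reach : ∀ (w : W) (a b : V),
      Z.Reaches (fun u => (lab u).ret w) a b ↔ Z.Reaches (fun u => (lab' u).ret w) a b := by
    intro w a b
    constructor
    · intro h
      induction h with
      | refl v => exact DGraph.Reaches.refl v
      | step h1 _ ih => exact DGraph.Reaches.step (by rw [key]; exact h1) ih
    · intro h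
      induction h with
      | refl v => exact DGraph.Reaches.refl v
      | step h1 _ ih => exact DGraph.Reaches.step (by rw [← key]; exact h1) ih
  have sel : ∀ (w : W) (x : V),
      Z.SelectsFrom (fun u => (lab u).ret w) x ↔ Z.SelectsFrom (fun u => (lab' u).ret w) x := by
    intro w x
    constructor
    · rintro ⟨s, hs, hr, hn⟩
      exact ⟨s, hs, (reach w s x).mp hr, by rw [key]; exact hn⟩
    · rintro ⟨s, hs, hr, hn⟩
      exact ⟨s, hs, (reach w s x).mpr hr, by rw [← key]; exact hn⟩
  refine ⟨sel, ?_⟩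
  intro ψ hspec σ hσ
  apply hspec
  intro i
  obtain ⟨x, hx, hφ⟩ := hσ i
  refine ⟨x, (sel (σ i) x).mpr hx, ?_⟩
  by_cases hxv : x = v0
  · subst hxv
    simp only [if_pos rfl] at hφ
    exact hent _ hφ
  · simpa [hxv] using hφ
end
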